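/- Let d ≥ 2, let f : ℝ^d → ℝ be twice continuously differentiable, and suppose Γ = f⁻¹({0}) is nonempty and compact with ∇f(y) ≠ 0 for every y ∈ Γ. Define the unit normal n(y) = ∇f(y)/‖∇f(y)‖ for y ∈ Γ. Then there exists a constant C > 0 such that for all x, y ∈ Γ, |⟨n(y), x − y⟩| ≤ C ‖x − y‖². -/

import Mathlib

open InnerProductSpace in
/-- Example 2.4 of the paper (following Nédélec): on a compact regular level set Γ of a
C² function, `g(x,y) = n(y)·(x−y)` behaves as `|x−y|²`, with `n = ∇f/‖∇f‖`. -/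
theorem stmt10 (d : ℕ) (hd : 2 ≤ d) (f : EuclideanSpace ℝ (Fin d) → ℝ)
    (hf : ContDiff ℝ 2 f)
    (hne : (f ⁻¹' {0}).Nonempty) (hcomp : IsCompact (f ⁻¹' {0}))
    (hgrad : ∀ y ∈ f ⁻¹' {0}, gradient f y ≠ 0) :
    ∃ C > (0:ℝ), ∀ x ∈ f ⁻¹' {0}, ∀ y ∈ f ⁻¹' {0},
      |(inner ℝ ((‖gradient f y‖)⁻¹ • gradient f y) (x - y) : ℝ)| ≤ C * ‖x - y‖ ^ 2 := by
  set Γ := f ⁻¹' {0} with hΓ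
  -- fderiv f is C¹
  have hf1 : ContDiff ℝ 1 (fderiv ℝ f) := hf.fderiv_right (by norm_num)
  -- gradient is continuous
  have hgcont : Continuous (gradient f) := by
    have : Continuous (fderiv ℝ f) := hf1.continuous
    exact (toDual ℝ (EuclideanSpace ℝ (Fin d))).symm.continuous.comp this
  -- lower bound on ‖gradient f y‖ on Γ
  obtain ⟨y₀, hy₀Γ, hy₀min⟩ := hcomp.exists_isMinOn hne
    (continuous_norm.comp hgcont).continuousOn
  set m := ‖gradient f y₀‖ with hm
  have hmpos : 0 < m := norm_pos_iff.mpr (hgrad y₀ hy₀Γ)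
  -- big ball containing Γ
  obtain ⟨R, hRpos, hRsub⟩ := hcomp.isBounded.subset_ball_lt 0 0
  set s : Set (EuclideanSpace ℝ (Fin d)) := Metric.closedBall 0 (3 * R) with hs
  have hΓs : Γ ⊆ s := fun z hz => by
    have := hRsub hz
    simp only [Metric.mem_ball] at this
    simp only [hs, Metric.mem_closedBall]
    linarith
  -- Lipschitz constant for fderiv f on s
  have hcont2 : ContinuousOn (fun z => ‖fderiv ℝ (fderiv ℝ f) z‖) s :=
    (continuous_norm.comp (hf1.continuous_fderiv (by norm_num))).continuousOn
  obtain ⟨K, hK⟩ := (isCompact_closedBall 0 (3 * R)).exists_bound_of_continuousOn hcont2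
  have hK0 : 0 ≤ K := le_trans (norm_nonneg _) (hK 0 (by simp [hs]; positivity))
  have hlip : ∀ a ∈ s, ∀ b ∈ s, ‖fderiv ℝ f a - fderiv ℝ f b‖ ≤ K * ‖a - b‖ := by
    intro a ha b hb
    exact (convex_closedBall 0 (3 * R)).norm_image_sub_le_of_norm_fderiv_le
      (fun z hz => (hf1.differentiable (by norm_num)).differentiableAt)
      (fun z hz => le_trans (le_of_eq (norm_norm _).symm) (hK z hz)) hb ha
  refine ⟨(K + 1) / m, by positivity, ?_⟩
  intro x hx y hy
  have hfx : f x = 0 := hx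
  have hfy : f y = 0 := hy
  have hxs : x ∈ s := hΓs hx
  have hys : y ∈ s := hΓs hy
  -- the small ball around y containing the segment
  set t : Set (EuclideanSpace ℝ (Fin d)) := Metric.closedBall y ‖x - y‖ with ht
  have hts : t ⊆ s := by
    intro z hz
    simp only [ht, Metric.mem_closedBall, dist_eq_norm] at hz
    simp only [hs, Metric.mem_closedBall, dist_zero_right]
    have h1 : ‖x - y‖ ≤ ‖x‖ + ‖y‖ := norm_sub_le _ _
    have h2 : ‖z‖ ≤ ‖z - y‖ + ‖y‖ := by have := norm_le_insert' z y; linarith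
    have hxR : ‖x‖ < R := by have := hRsub hx; simpa [dist_zero_right] using this
    have hyR : ‖y‖ < R := by have := hRsub hy; simpa [dist_zero_right] using this
    linarith
  -- Taylor estimate
  have htaylor : ‖f x - f y - (fderiv ℝ f y) (x - y)‖ ≤ (K * ‖x - y‖) * ‖x - y‖ := by
    refine (convex_closedBall y ‖x - y‖).norm_image_sub_le_of_norm_fderiv_le'
      (f := f) (φ := fderiv ℝ f y) (C := K * ‖x - y‖)
      (fun z hz => (hf.differentiable (by norm_num)).differentiableAt)
      (fun z hz => ?_)
      (Metric.mem_closedBall_self (norm_nonneg _))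
      (by simp [ht, Metric.mem_closedBall, dist_eq_norm])
    have hzy : ‖z - y‖ ≤ ‖x - y‖ := by
      simpa [dist_eq_norm] using hz
    have hys' : y ∈ t := Metric.mem_closedBall_self (norm_nonneg _)
    calc ‖fderiv ℝ f z - fderiv ℝ f y‖ ≤ K * ‖z - y‖ := hlip z (hts hz) y hys
      _ ≤ K * ‖x - y‖ := by nlinarith
  rw [hfx, hfy] at htaylor
  simp only [sub_zero, zero_sub, norm_neg] at htaylor
  have hinner : (inner ℝ (gradient f y) (x - y) : ℝ) = (fderiv ℝ f y) (x - y) := by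
    simp only [gradient]
    exact toDual_symm_apply
  have hmy : m ≤ ‖gradient f y‖ := hy₀min hy
  have hkey : |(inner ℝ (gradient f y) (x - y) : ℝ)| ≤ K * ‖x - y‖ ^ 2 := by
    rw [hinner]
    calc |(fderiv ℝ f y) (x - y)| = ‖(fderiv ℝ f y) (x - y)‖ := rfl
      _ ≤ (K * ‖x - y‖) * ‖x - y‖ := htaylor
      _ = K * ‖x - y‖ ^ 2 := by ring
  rw [inner_smul_left]
  simp only [RCLike.conj_to_real, map_inv₀]
  rw [abs_mul, abs_inv, abs_norm]
  have hgy : 0 < ‖gradient f y‖ := lt_of_lt_of_le hmpos hmy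
  calc ‖gradient f y‖⁻¹ * |(inner ℝ (gradient f y) (x - y) : ℝ)|
      ≤ m⁻¹ * (K * ‖x - y‖ ^ 2) := by
        apply mul_le_mul (by exact inv_anti₀ hmpos hmy) hkey (abs_nonneg _)
        positivity
    _ ≤ (K + 1) / m * ‖x - y‖ ^ 2 := by
        rw [div_eq_mul_inv]
        have : m⁻¹ * (K * ‖x - y‖ ^ 2) = K * m⁻¹ * ‖x - y‖ ^ 2 := by ring
        rw [this]
        apply mul_le_mul_of_nonneg_right _ (by positivity)
        have : (0:ℝ) < m⁻¹ := by positivity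
        nlinarith
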